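/- arXiv:2104.05839 — 7 statements merged into one kernel-verified Lean document; each statement's English description precedes it below -/
import Mathlib

section
/- Let r be a natural number, set a = (r+1)/(2r+1), and let p be a real number with p ≥ 1. Then a^(log₂(1+p)) + a^(log₂(1+1/p)) ≤ 2a. -/
/-- For a natural number `r`, `a = (r+1)/(2r+1)` and a real `p ≥ 1`,
`a^(log₂(1+p)) + a^(log₂(1+1/p)) ≤ 2a`. -/
theorem stmt2 (r : ℕ) (a : ℝ) (ha : a = (r + 1 : ℝ) / (2 * r + 1)) (p : ℝ) (hp : 1 ≤ p) :
    a ^ Real.logb 2 (1 + p) + a ^ Real.logb 2 (1 + 1 / p) ≤ 2 * a := by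
  have hr : (0 : ℝ) < 2 * r + 1 := by positivity
  have ha0 : 0 < a := by rw [ha]; positivity
  have ha1 : a ≤ 1 := by rw [ha, div_le_one hr]; linarith
  have hhalf : (1 / 2 : ℝ) ≤ a := by
    rw [ha, le_div_iff₀ hr]; linarith
  set s : ℝ := -Real.logb 2 a with hs
  have hs0 : 0 ≤ s := by
    have := Real.logb_nonpos (b := 2) (by norm_num) ha0.le ha1
    linarith
  have hs1 : s ≤ 1 := by
    have h1 : Real.logb 2 (1 / 2 : ℝ) ≤ Real.logb 2 a :=
      Real.logb_le_logb_of_le (by norm_num) (by norm_num) hhalf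
    have h2 : Real.logb 2 (1 / 2 : ℝ) = -1 := by
      rw [show (1 / 2 : ℝ) = 2 ^ (-1 : ℝ) by norm_num [Real.rpow_neg_one]]
      exact Real.logb_rpow (b := 2) (by norm_num) (by norm_num)
    rw [h2] at h1
    simp only [hs]; linarith
  have hp0 : 0 < p := lt_of_lt_of_le one_pos hp
  -- key rewriting: a ^ logb 2 x = (x ^ s)⁻¹ for x > 0
  have key : ∀ x : ℝ, 0 < x → a ^ Real.logb 2 x = (x ^ s)⁻¹ := by
    intro x hx
    rw [← Real.rpow_neg hx.le, Real.rpow_def_of_pos ha0, Real.rpow_def_of_pos hx]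
    congr 1
    simp only [hs, Real.logb, neg_neg]
    ring
  have h1p : (0:ℝ) < 1 + p := by linarith
  have h1q : (0:ℝ) < 1 + 1 / p := by positivity
  have ha2 : a = (2 ^ s : ℝ)⁻¹ := by
    have := Real.rpow_logb (x := a) two_pos (by norm_num) ha0
    rw [← this, ← Real.rpow_neg (by norm_num : (0:ℝ) ≤ 2)]
    rw [hs, neg_neg]
  rw [key _ h1p, key _ h1q, ha2]
  -- rewrite (1+1/p)^s
  have hq : (1 + 1 / p) = (1 + p) / p := by field_simp; ring
  have hps : 0 < p ^ s := Real.rpow_pos_of_pos hp0 s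
  have h1ps : 0 < (1 + p) ^ s := Real.rpow_pos_of_pos h1p s
  have h2s : 0 < (2:ℝ) ^ s := Real.rpow_pos_of_pos two_pos s
  rw [hq, Real.div_rpow h1p.le hp0.le]
  rw [inv_div]
  -- concavity of x ↦ x^s
  have hconc := (Real.concaveOn_rpow hs0 hs1).2 (x := 1) (y := p)
    (by norm_num) (Set.mem_Ici.2 hp0.le) (by norm_num : (0:ℝ) ≤ 1/2)
    (by norm_num : (0:ℝ) ≤ 1/2) (by norm_num)
  simp only [smul_eq_mul, Real.one_rpow] at hconc
  have hmid : ((1:ℝ)/2 * 1 + 1/2 * p) = (1 + p) / 2 := by ring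
  rw [hmid, Real.div_rpow h1p.le (by norm_num)] at hconc
  -- goal: ((1+p)^s)⁻¹ + p^s/(1+p)^s ≤ 2 * (2^s)⁻¹
  have hsum : ((1 + p) ^ s)⁻¹ + p ^ s / (1 + p) ^ s = (1 + p ^ s) / (1 + p) ^ s := by
    field_simp
  have hrhs : 2 * ((2:ℝ) ^ s)⁻¹ = 2 / 2 ^ s := by ring
  rw [hsum, hrhs, div_le_div_iff₀ h1ps h2s]
  have hmul := mul_le_mul_of_nonneg_right hconc h2s.le
  rw [div_mul_cancel₀ _ (ne_of_gt h2s)] at hmul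
  nlinarith [hmul]
end

section
/- Let a be a real number with 1/2 < a ≤ 2/3 and let p be a real number with p > 0. Then a^(log₂(1+p)) + a^(log₂(1+1/p)) ≤ 2a; that is, the function f(p) = a^(log₂(1+p)) + a^(log₂(1+1/p)) on (0,∞) attains its maximum value 2a at p = 1. -/
open Real

/-- Key swap identity: `a ^ logb 2 x = x ^ logb 2 a` for positive `a`, `x`. -/
lemma swap_rpow_logb {a x : ℝ} (ha : 0 < a) (hx : 0 < x) :
    a ^ Real.logb 2 x = x ^ Real.logb 2 a := by
  rw [Real.rpow_def_of_pos ha, Real.rpow_def_of_pos hx, Real.logb, Real.logb]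
  congr 1
  ring

/-- For a real `a` with `1/2 < a ≤ 2/3`, the function
`f(p) = a^(log₂(1+p)) + a^(log₂(1+1/p))` on `(0,∞)` attains its maximum value `2a`
at `p = 1`: every value is `≤ 2a`, and the value at `p = 1` equals `2a`. -/
theorem stmt3 (a : ℝ) (ha₁ : 1 / 2 < a) (ha₂ : a ≤ 2 / 3) :
    (∀ p : ℝ, 0 < p →
      a ^ Real.logb 2 (1 + p) + a ^ Real.logb 2 (1 + 1 / p) ≤ 2 * a) ∧
    a ^ Real.logb 2 (1 + (1 : ℝ)) + a ^ Real.logb 2 (1 + 1 / (1 : ℝ)) = 2 * a := by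
  have ha : 0 < a := by linarith
  constructor
  · intro p hp
    have h1p : (0:ℝ) < 1 + p := by linarith
    have h1q : (0:ℝ) < 1 + 1 / p := by positivity
    set c : ℝ := Real.logb 2 a with hc
    have hc0 : c < 0 := Real.logb_neg (by norm_num) ha (by linarith)
    have hc1 : -1 < c := by
      have h : Real.logb 2 (1/2) < c := by
        apply Real.logb_lt_logb (by norm_num) (by norm_num) ha₁
      rw [one_div, Real.logb_inv, Real.logb_self_eq_one (by norm_num)] at h
      linarith
    set b : ℝ := -c with hb
    have hb0 : 0 < b := by rw [hb]; linarith
    have hb1 : b < 1 := by rw [hb]; linarith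
    rw [swap_rpow_logb ha h1p, swap_rpow_logb ha h1q]
    set s : ℝ := 1 / (1 + p) with hs
    set t : ℝ := p / (1 + p) with ht
    have hs0 : 0 < s := by positivity
    have ht0 : 0 < t := by positivity
    have hst : s + t = 1 := by rw [hs, ht]; field_simp
    have e1 : (1 + p) ^ c = s ^ b := by
      rw [hs, one_div, hb, Real.inv_rpow h1p.le, ← Real.rpow_neg h1p.le, neg_neg]
    have e2 : (1 + 1 / p) ^ c = t ^ b := by
      have htv : 1 + 1 / p = t⁻¹ := by rw [ht]; field_simp; ring
      rw [htv, hb, Real.inv_rpow ht0.le, ← Real.rpow_neg ht0.le]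
    rw [e1, e2]
    have key := (Real.concaveOn_rpow hb0.le hb1.le).2
      (Set.mem_Ici.mpr hs0.le) (Set.mem_Ici.mpr ht0.le)
      (by norm_num : (0:ℝ) ≤ 1/2) (by norm_num : (0:ℝ) ≤ 1/2) (by norm_num)
    have hmid : (1/2 : ℝ) • s + (1/2 : ℝ) • t = 1/2 := by
      simp only [smul_eq_mul]; linarith
    rw [hmid] at key
    simp only [smul_eq_mul] at key
    have h2 : ((1:ℝ)/2) ^ b = a := by
      rw [one_div, Real.inv_rpow (by norm_num : (0:ℝ) ≤ 2),
        ← Real.rpow_neg (by norm_num : (0:ℝ) ≤ 2), hb, neg_neg, hc,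
        Real.rpow_logb (by norm_num) (by norm_num) ha]
    rw [h2] at key
    linarith
  · rw [show (1:ℝ) + 1 = 2 by norm_num, show (1:ℝ) + 1/1 = 2 by norm_num,
      Real.logb_self_eq_one (by norm_num), Real.rpow_one]
    ring
end

section
/- Let m = 2r+1 with r ≥ 1 and let R_m be the highly regular tournament on vertices v_1, …, v_m. A subset S of the vertices of R_m is acyclic if and only if there exists an index i such that S ⊆ {v_i, v_{i+1}, …, v_{i+r}}, where indices are taken modulo m. In particular, the maximal acyclic sets of R_m are exactly the sets of r+1 cyclically consecutive vertices. -/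
/-- A tournament: an irreflexive relation such that for every pair of distinct
vertices exactly one of the two directions holds. -/
def IsTournament {V : Type*} (rel : V → V → Prop) : Prop :=
  (∀ v, ¬ rel v v) ∧ ∀ u v : V, u ≠ v → (rel u v ↔ ¬ rel v u)

/-- A set `S` is acyclic (transitive) in a tournament `rel`: the relation restricted
to `S` is transitive; for a tournament this is equivalent to the restriction being a
strict linear order, i.e. to the induced subtournament having no directed cycle. -/
def AcyclicIn {V : Type*} (rel : V → V → Prop) (S : Set V) : Prop :=
  ∀ a ∈ S, ∀ b ∈ S, ∀ c ∈ S, rel a b → rel b c → rel a c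

/-- The (acyclic) chromatic number: the least `k` such that there is a coloring of the
vertices with `k` colors all of whose color classes are acyclic sets. -/
noncomputable def chromaticNumber {V : Type*} (rel : V → V → Prop) : ℕ :=
  sInf {k : ℕ | ∃ c : V → Fin k, ∀ i : Fin k, AcyclicIn rel {v | c v = i}}

/-- The dimension of the acyclic complex of a tournament: the maximum size of an
acyclic set, minus one. -/
noncomputable def acyDim {V : Type*} (rel : V → V → Prop) : ℕ :=
  sSup {n : ℕ | ∃ S : Finset V, AcyclicIn rel ↑S ∧ S.card = n} - 1

/-- The edge relation of the highly regular tournament `R_{2r+1}` on `ZMod (2r+1)`: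
`i → j` iff `j ≡ i + l (mod 2r+1)` for some `1 ≤ l ≤ r`. -/
def hrRel (r : ℕ) (i j : ZMod (2 * r + 1)) : Prop :=
  ∃ l : ℕ, 1 ≤ l ∧ l ≤ r ∧ j = i + (l : ZMod (2 * r + 1))

/-- The edge relation of the composition `R_{2q+1}(P^1, …, P^{2q+1})` of the tournaments
`relP i` over the highly regular tournament `R_{2q+1}`: inside a block use the block's
relation, between different blocks use the highly regular relation on the indices. -/
def compTournRel (q : ℕ) {V : ZMod (2 * q + 1) → Type*} (relP : ∀ i, V i → V i → Prop)
    (u v : Σ i, V i) : Prop :=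
  (∃ h : u.1 = v.1, relP v.1 (h ▸ u.2) v.2) ∨ (u.1 ≠ v.1 ∧ hrRel q u.1 v.1)

lemma hr_iff (r : ℕ) (i j : ZMod (2*r+1)) :
    hrRel r i j ↔ 1 ≤ (j - i).val ∧ (j - i).val ≤ r := by
  constructor
  · rintro ⟨l, hl1, hl2, rfl⟩
    have h : i + (l : ZMod (2*r+1)) - i = (l : ZMod (2*r+1)) := by ring
    rw [h, ZMod.val_cast_of_lt (by omega)]
    exact ⟨hl1, hl2⟩
  · rintro ⟨h1, h2⟩
    refine ⟨(j - i).val, h1, h2, ?_⟩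
    rw [ZMod.natCast_val, ZMod.cast_id]
    ring

lemma hr_irrefl (r : ℕ) (v : ZMod (2*r+1)) : ¬ hrRel r v v := by
  rw [hr_iff]; simp

lemma hr_total (r : ℕ) {i j : ZMod (2*r+1)} (h : i ≠ j) :
    hrRel r i j ∨ hrRel r j i := by
  rw [hr_iff, hr_iff]
  have hd : (j - i).val < 2*r+1 := ZMod.val_lt _
  have hd0 : (j - i).val ≠ 0 := by
    rw [Ne, ZMod.val_eq_zero, sub_eq_zero]; exact fun hh => h hh.symm
  have hneg : (i - j) = -(j - i) := by ring
  have h2 : (i - j).val = 2*r+1 - (j - i).val := by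
    rw [hneg, ZMod.neg_val, if_neg (fun hh => hd0 (by simp [hh]))]
  omega

lemma hr_asymm (r : ℕ) {i j : ZMod (2*r+1)} (h1 : hrRel r i j) (h2 : hrRel r j i) : False := by
  rw [hr_iff] at h1 h2
  have hd : (j - i).val < 2*r+1 := ZMod.val_lt _
  have hd0 : (j - i).val ≠ 0 := by omega
  have hneg : (i - j) = -(j - i) := by ring
  have h3 : (i - j).val = 2*r+1 - (j - i).val := by
    rw [hneg, ZMod.neg_val, if_neg (fun hh => hd0 (by simp [hh]))]
  omega

lemma exists_min (r : ℕ) (S : Set (ZMod (2*r+1))) (hS : AcyclicIn (hrRel r) S)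
    {a0 : ZMod (2*r+1)} (ha0 : a0 ∈ S) :
    ∃ a ∈ S, ∀ b ∈ S, b ≠ a → hrRel r a b := by
  classical
  set T : Finset (ZMod (2*r+1)) := S.toFinset with hT
  have hmemT : ∀ x, x ∈ T ↔ x ∈ S := by intro x; simp [hT]
  obtain ⟨a, haT, hmin⟩ := T.exists_min_image
    (fun x => (T.filter (fun y => hrRel r y x)).card) ⟨a0, (hmemT a0).2 ha0⟩
  have haS : a ∈ S := (hmemT a).1 haT
  refine ⟨a, haS, ?_⟩
  intro b hb hba
  rcases hr_total r (fun hh : a = b => hba hh.symm) with h | h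
  · exact h
  exfalso
  have hsub : T.filter (fun y => hrRel r y b) ⊂ T.filter (fun y => hrRel r y a) := by
    constructor
    · intro z hz
      simp only [Finset.mem_filter] at *
      exact ⟨hz.1, hS z ((hmemT z).1 hz.1) b hb a haS hz.2 h⟩
    · intro hle
      have hbmem : b ∈ T.filter (fun y => hrRel r y a) := by
        simp only [Finset.mem_filter]; exact ⟨(hmemT b).2 hb, h⟩
      have := hle hbmem
      simp only [Finset.mem_filter] at this
      exact hr_irrefl r b this.2
  have h1 := Finset.card_lt_card hsub
  have h2 := hmin b ((hmemT b).2 hb)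
  omega

lemma val_diff_le (r la lb : ℕ) (i : ZMod (2*r+1)) (hla : la ≤ r) (hlb : lb ≤ r) (h : la < lb) :
    ((i + (lb:ZMod (2*r+1))) - (i + (la:ZMod (2*r+1)))).val = lb - la := by
  have h1 : (i + (lb:ZMod (2*r+1))) - (i + (la:ZMod (2*r+1))) = ((lb - la : ℕ) : ZMod (2*r+1)) := by
    rw [Nat.cast_sub h.le]; ring
  rw [h1, ZMod.val_cast_of_lt (by omega)]

lemma rel_lt (r la lb : ℕ) (i : ZMod (2*r+1)) (hla : la ≤ r) (hlb : lb ≤ r)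
    (h : hrRel r (i + (la:ZMod (2*r+1))) (i + (lb:ZMod (2*r+1)))) : la < lb := by
  rcases lt_trichotomy la lb with hh | hh | hh
  · exact hh
  · exfalso; rw [hh] at h; exact hr_irrefl r _ h
  · exfalso
    have h2 : hrRel r (i + (lb:ZMod (2*r+1))) (i + (la:ZMod (2*r+1))) := by
      rw [hr_iff, val_diff_le r lb la i hlb hla hh]
      omega
    exact hr_asymm r h h2

lemma acyclic_iff (r : ℕ) (hr : 1 ≤ r) (S : Set (ZMod (2*r+1))) :
    AcyclicIn (hrRel r) S ↔
      ∃ i : ZMod (2*r+1), ∀ x ∈ S, ∃ l : ℕ, l ≤ r ∧ x = i + (l : ZMod (2*r+1)) := by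
  constructor
  · intro hS
    rcases Set.eq_empty_or_nonempty S with rfl | ⟨a0, ha0⟩
    · exact ⟨0, by simp⟩
    obtain ⟨a, haS, hamin⟩ := exists_min r S hS ha0
    refine ⟨a, ?_⟩
    intro x hx
    by_cases hxa : x = a
    · exact ⟨0, by omega, by simp [hxa]⟩
    · obtain ⟨l, hl1, hl2, hx'⟩ := hamin x hx hxa
      exact ⟨l, hl2, hx'⟩
  · rintro ⟨i, hi⟩
    intro a ha b hb c hc hab hbc
    obtain ⟨la, hla, rfl⟩ := hi a ha
    obtain ⟨lb, hlb, rfl⟩ := hi b hb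
    obtain ⟨lc, hlc, rfl⟩ := hi c hc
    have h1 := rel_lt r la lb i hla hlb hab
    have h2 := rel_lt r lb lc i hlb hlc hbc
    rw [hr_iff, val_diff_le r la lc i hla hlc (by omega)]
    omega

def ivalF (r : ℕ) (i : ZMod (2*r+1)) : Finset (ZMod (2*r+1)) :=
  Finset.image (fun l : ℕ => i + (l : ZMod (2*r+1))) (Finset.range (r+1))

lemma coe_ivalF (r : ℕ) (i : ZMod (2*r+1)) :
    (ivalF r i : Set (ZMod (2*r+1))) = {x | ∃ l : ℕ, l ≤ r ∧ x = i + (l : ZMod (2*r+1))} := by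
  ext x
  simp only [ivalF, Finset.coe_image, Finset.coe_range, Set.mem_image, Set.mem_Iio,
    Set.mem_setOf_eq, Nat.lt_succ_iff]
  constructor
  · rintro ⟨l, hl, rfl⟩; exact ⟨l, hl, rfl⟩
  · rintro ⟨l, hl, rfl⟩; exact ⟨l, hl, rfl⟩

lemma card_ivalF (r : ℕ) (i : ZMod (2*r+1)) : (ivalF r i).card = r + 1 := by
  rw [ivalF, Finset.card_image_of_injOn, Finset.card_range]
  intro l hl l' hl' h
  simp only [Finset.coe_range, Set.mem_Iio] at hl hl'
  have : (l : ZMod (2*r+1)) = (l' : ZMod (2*r+1)) := by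
    have := add_left_cancel h
    exact this
  have := congrArg ZMod.val this
  rwa [ZMod.val_cast_of_lt (by omega), ZMod.val_cast_of_lt (by omega)] at this


/-- Let `m = 2r+1` with `r ≥ 1` and `R_m` the highly regular tournament on `ZMod m`.
A subset `S` of the vertices is acyclic iff it is contained in a set of `r+1`
cyclically consecutive vertices `{i, i+1, …, i+r}`; and the maximal acyclic sets
are exactly the sets of `r+1` cyclically consecutive vertices. -/
theorem stmt4 (r : ℕ) (hr : 1 ≤ r) :
    (∀ S : Set (ZMod (2 * r + 1)),
      AcyclicIn (hrRel r) S ↔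
        ∃ i : ZMod (2 * r + 1), ∀ x ∈ S, ∃ l : ℕ, l ≤ r ∧ x = i + (l : ZMod (2 * r + 1))) ∧
    (∀ M : Set (ZMod (2 * r + 1)),
      (AcyclicIn (hrRel r) M ∧
          ∀ S : Set (ZMod (2 * r + 1)), AcyclicIn (hrRel r) S → M ⊆ S → S = M) ↔
        ∃ i : ZMod (2 * r + 1),
          M = {x | ∃ l : ℕ, l ≤ r ∧ x = i + (l : ZMod (2 * r + 1))}) := by
  refine ⟨acyclic_iff r hr, ?_⟩
  intro M
  constructor
  · rintro ⟨hM, hmax⟩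
    obtain ⟨i, hi⟩ := (acyclic_iff r hr M).1 hM
    have hMsub : M ⊆ {x | ∃ l : ℕ, l ≤ r ∧ x = i + (l : ZMod (2*r+1))} := fun x hx => hi x hx
    have hIacy : AcyclicIn (hrRel r) {x | ∃ l : ℕ, l ≤ r ∧ x = i + (l : ZMod (2*r+1))} :=
      (acyclic_iff r hr _).2 ⟨i, fun x hx => hx⟩
    exact ⟨i, (hmax _ hIacy hMsub).symm⟩
  · rintro ⟨i, rfl⟩
    refine ⟨(acyclic_iff r hr _).2 ⟨i, fun x hx => hx⟩, ?_⟩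
    intro S hS hMS
    obtain ⟨j, hj⟩ := (acyclic_iff r hr S).1 hS
    have hSsub : S ⊆ (ivalF r j : Set _) := by
      rw [coe_ivalF]; exact fun x hx => hj x hx
    have h1 : ivalF r i ⊆ ivalF r j := by
      rw [← Finset.coe_subset, coe_ivalF]
      exact fun x hx => hSsub (hMS hx)
    have h2 : ivalF r i = ivalF r j :=
      Finset.eq_of_subset_of_card_le h1 (by rw [card_ivalF, card_ivalF])
    refine Set.Subset.antisymm ?_ hMS
    intro x hx
    rw [← coe_ivalF, h2]
    exact hSsub hx
end

section
/- Let T = R_{2r+1}(P^1, …, P^{2r+1}) be the composition of tournaments P^1, …, P^{2r+1} over the highly regular tournament R_{2r+1}, with r ≥ 1, and let d_i = dim(P^i) for each i. Then dim(T) = max over i ∈ {1, …, 2r+1} of (d_i + d_{i+1} + … + d_{i+r} + r), where indices are taken modulo 2r+1. -/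
namespace Stmt7Aux

lemma cast_inj (r : ℕ) {l l' : ℕ} (hl : l ≤ 2*r) (hl' : l' ≤ 2*r)
    (h : (l : ZMod (2*r+1)) = (l' : ZMod (2*r+1))) : l = l' := by
  have := congrArg ZMod.val h
  rwa [ZMod.val_cast_of_lt (by omega), ZMod.val_cast_of_lt (by omega)] at this

lemma hr_not_both {r : ℕ} {i j : ZMod (2*r+1)} (h1 : hrRel r i j) (h2 : hrRel r j i) : False := by
  obtain ⟨l, hl1, hl2, hl3⟩ := h1
  obtain ⟨l', hl1', hl2', hl3'⟩ := h2
  rw [hl3] at hl3'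
  have : ((l + l' : ℕ) : ZMod (2*r+1)) = 0 := by push_cast; linear_combination -hl3'
  rw [ZMod.natCast_eq_zero_iff] at this
  have := Nat.le_of_dvd (by omega) this
  omega

lemma hr_irrefl {r : ℕ} (i : ZMod (2*r+1)) : ¬ hrRel r i i := fun h => hr_not_both h h

lemma hr_total {r : ℕ} {i j : ZMod (2*r+1)} (h : i ≠ j) : hrRel r i j ∨ hrRel r j i := by
  set k := (j - i).val with hk
  have hkne : j - i ≠ 0 := sub_ne_zero.mpr (Ne.symm h)
  have hklt : k < 2*r+1 := ZMod.val_lt _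
  have hk1 : 1 ≤ k := by
    have : k ≠ 0 := fun h0 => hkne ((ZMod.val_eq_zero _).mp h0)
    omega
  have hjk : j = i + (k : ZMod (2*r+1)) := by
    rw [hk, ZMod.natCast_zmod_val]; ring
  rcases le_or_gt k r with hle | hlt
  · exact Or.inl ⟨k, hk1, hle, hjk⟩
  · refine Or.inr ⟨2*r+1 - k, by omega, by omega, ?_⟩
    have h2 : ((2*r+1 - k : ℕ) : ZMod (2*r+1)) = -(k : ZMod (2*r+1)) := by
      rw [Nat.cast_sub (by omega)]; simp
    rw [h2, hjk]; ring

lemma hr_tournament (r : ℕ) : IsTournament (hrRel r) := by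
  refine ⟨hr_irrefl, fun i j hij => ⟨fun h1 h2 => hr_not_both h1 h2, fun h2 => ?_⟩⟩
  rcases hr_total hij with h | h
  · exact h
  · exact absurd h h2

/-- `hrRel` within the interval `{i, i+1, …, i+r}` is by position. -/
lemma hr_interval {r : ℕ} (i : ZMod (2*r+1)) {l1 l2 : ℕ} (h1 : l1 ≤ r) (h2 : l2 ≤ r) :
    hrRel r (i + l1) (i + l2) ↔ l1 < l2 := by
  constructor
  · rintro ⟨l, hl1, hl2, hl3⟩
    have : ((l2 : ℕ) : ZMod (2*r+1)) = ((l1 + l : ℕ) : ZMod (2*r+1)) := by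
      push_cast; linear_combination hl3
    have := cast_inj r (by omega) (by omega) this
    omega
  · intro hlt
    refine ⟨l2 - l1, by omega, by omega, ?_⟩
    have : ((l2 - l1 : ℕ) : ZMod (2*r+1)) = (l2 : ZMod (2*r+1)) - l1 := by
      rw [Nat.cast_sub (by omega)]
    rw [this]; ring


section MaxAcy

variable {W : Type*} (rel : W → W → Prop)

def maxAcySet : Set ℕ := {n : ℕ | ∃ S : Finset W, AcyclicIn rel ↑S ∧ S.card = n}

noncomputable def maxAcy : ℕ := sSup (maxAcySet rel)

lemma bddAbove_maxAcySet [Fintype W] : BddAbove (maxAcySet rel) :=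
  ⟨Fintype.card W, fun n hn => by obtain ⟨S, _, hc⟩ := hn; exact hc ▸ Finset.card_le_univ S⟩

lemma nonempty_maxAcySet : (maxAcySet rel).Nonempty :=
  ⟨0, ∅, by simp [AcyclicIn], by simp⟩

lemma card_le_maxAcy [Fintype W] {S : Finset W} (h : AcyclicIn rel ↑S) : S.card ≤ maxAcy rel :=
  le_csSup (bddAbove_maxAcySet rel) ⟨S, h, rfl⟩

lemma maxAcy_spec [Fintype W] : ∃ S : Finset W, AcyclicIn rel ↑S ∧ S.card = maxAcy rel :=
  Nat.sSup_mem (nonempty_maxAcySet rel) (bddAbove_maxAcySet rel)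

lemma one_le_maxAcy [Fintype W] [Nonempty W] : 1 ≤ maxAcy rel := by
  obtain ⟨v⟩ := ‹Nonempty W›
  have : AcyclicIn rel ↑({v} : Finset W) := by
    intro a ha b hb c hc hab hbc
    simp only [Finset.coe_singleton, Set.mem_singleton_iff] at ha hb hc
    subst ha; subst hb; subst hc; exact hab
  have := card_le_maxAcy rel this
  simpa using this

lemma acyDim_def : (sSup (maxAcySet rel) - 1 : ℕ) = maxAcy rel - 1 := rfl

lemma acyclic_mono {S T : Set W} (h : AcyclicIn rel T) (hST : S ⊆ T) : AcyclicIn rel S :=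
  fun a ha b hb c hc => h a (hST ha) b (hST hb) c (hST hc)

/-- Every nonempty acyclic set in a tournament has a source. -/
lemma exists_source (ht : IsTournament rel) (B : Finset W) (hne : B.Nonempty)
    (hB : AcyclicIn rel ↑B) : ∃ s ∈ B, ∀ j ∈ B, j ≠ s → rel s j := by
  classical
  revert hB
  induction hne using Finset.Nonempty.cons_induction with
  | singleton a => exact fun _ => ⟨a, by simp, fun j hj hja => absurd (by simpa using hj) hja⟩
  | cons a s ha hs ih =>
    intro hB
    obtain ⟨t, hts, htsrc⟩ := ih (acyclic_mono rel hB (by intro x hx; simp only [Finset.coe_cons]; exact Set.mem_insert_of_mem _ hx))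
    have hat : a ≠ t := fun h => ha (h ▸ hts)
    by_cases h : rel a t
    · refine ⟨a, Finset.mem_cons_self a s, fun j hj hja => ?_⟩
      rcases Finset.mem_cons.mp hj with h' | h'
      · exact absurd h' hja
      · rcases eq_or_ne j t with rfl | hjt
        · exact h
        · exact hB a (by simp) t (by simp [hts]) j (by simp [h'])
            h (htsrc j h' hjt)
    · have hta : rel t a := ((ht.2 t a hat.symm).mpr h)
      refine ⟨t, Finset.mem_cons.mpr (Or.inr hts), fun j hj hjt => ?_⟩
      rcases Finset.mem_cons.mp hj with rfl | h'
      · exact hta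
      · exact htsrc j h' hjt

end MaxAcy


section Comp

variable {r : ℕ} {V : ZMod (2*r+1) → Type} [∀ i, Fintype (V i)]
  (relP : ∀ i, V i → V i → Prop)

noncomputable def blockFinset (S : Finset (Σ i, V i)) (i : ZMod (2*r+1)) : Finset (V i) :=
  letI := Classical.decPred (fun x : V i => (⟨i, x⟩ : Σ j, V j) ∈ S)
  Finset.univ.filter (fun x => (⟨i, x⟩ : Σ j, V j) ∈ S)

lemma mem_blockFinset {S : Finset (Σ i, V i)} {i : ZMod (2*r+1)} {x : V i} :
    x ∈ blockFinset S i ↔ (⟨i, x⟩ : Σ j, V j) ∈ S := by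
  simp [blockFinset]

lemma card_eq_sum_blocks (S : Finset (Σ i, V i)) :
    S.card = ∑ i, (blockFinset S i).card := by
  rw [← Finset.card_sigma]
  congr 1
  ext ⟨i, x⟩
  simp [Finset.mem_sigma, mem_blockFinset]

lemma block_acyclic {S : Finset (Σ i, V i)} (hS : AcyclicIn (compTournRel r relP) ↑S)
    (i : ZMod (2*r+1)) : AcyclicIn (relP i) ↑(blockFinset S i) := by
  intro a ha b hb c hc hab hbc
  simp only [Finset.mem_coe, mem_blockFinset] at ha hb hc
  have h1 : compTournRel r relP ⟨i, a⟩ ⟨i, b⟩ := Or.inl ⟨rfl, hab⟩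
  have h2 : compTournRel r relP ⟨i, b⟩ ⟨i, c⟩ := Or.inl ⟨rfl, hbc⟩
  have h3 := hS _ ha _ hb _ hc h1 h2
  rcases h3 with ⟨h, hrel⟩ | ⟨hne, _⟩
  · exact hrel
  · exact absurd rfl hne

lemma image_acyclic {S : Finset (Σ i, V i)} (hS : AcyclicIn (compTournRel r relP) ↑S) :
    AcyclicIn (hrRel r) ↑(S.image Sigma.fst) := by
  intro i hi j hj k hk hij hjk
  simp only [Finset.coe_image, Set.mem_image, Finset.mem_coe] at hi hj hk
  obtain ⟨u, hu, hu1⟩ := hi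
  obtain ⟨v, hv, hv1⟩ := hj
  obtain ⟨w, hw, hw1⟩ := hk
  have hij' : i ≠ j := fun h => hr_irrefl i (h ▸ hij)
  have hjk' : j ≠ k := fun h => hr_irrefl j (h ▸ hjk)
  have hik : i ≠ k := fun h => hr_not_both hij (h ▸ hjk)
  have h1 : compTournRel r relP u v := Or.inr ⟨by rw [hu1, hv1]; exact hij', by rw [hu1, hv1]; exact hij⟩
  have h2 : compTournRel r relP v w := Or.inr ⟨by rw [hv1, hw1]; exact hjk', by rw [hv1, hw1]; exact hjk⟩
  have h3 := hS _ hu _ hv _ hw h1 h2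
  rcases h3 with ⟨h, _⟩ | ⟨_, hhr⟩
  · exact absurd (hu1 ▸ hw1 ▸ h) hik
  · rwa [hu1, hw1] at hhr

lemma upper_bound {S : Finset (Σ i, V i)} (hS : AcyclicIn (compTournRel r relP) ↑S) :
    S.card ≤ Finset.univ.sup (fun i : ZMod (2*r+1) =>
      ∑ l ∈ Finset.range (r + 1), maxAcy (relP (i + (l : ZMod (2*r+1))))) := by
  classical
  rcases S.eq_empty_or_nonempty with rfl | hne
  · simp
  set B : Finset (ZMod (2*r+1)) := S.image Sigma.fst with hBdef
  have hBne : B.Nonempty := hne.image _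
  have hB : AcyclicIn (hrRel r) ↑B := image_acyclic relP hS
  obtain ⟨i₀, hi₀, hsrc⟩ := exists_source _ (hr_tournament r) B hBne hB
  have hsub : B ⊆ (Finset.range (r+1)).image (fun l : ℕ => i₀ + (l : ZMod (2*r+1))) := by
    intro j hj
    rcases eq_or_ne j i₀ with rfl | hji
    · exact Finset.mem_image.mpr ⟨0, by simp, by simp⟩
    · obtain ⟨l, hl1, hl2, hl3⟩ := hsrc j hj hji
      exact Finset.mem_image.mpr ⟨l, Finset.mem_range.mpr (by omega), hl3.symm⟩
  have hinj : ∀ x ∈ Finset.range (r+1), ∀ y ∈ Finset.range (r+1),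
      i₀ + (x : ZMod (2*r+1)) = i₀ + (y : ZMod (2*r+1)) → x = y := by
    intro x hx y hy h
    exact cast_inj r (by have := Finset.mem_range.mp hx; omega)
      (by have := Finset.mem_range.mp hy; omega) (by exact add_left_cancel h)
  calc S.card = ∑ i, (blockFinset S i).card := card_eq_sum_blocks S
    _ = ∑ j ∈ B, (blockFinset S j).card := by
        refine (Finset.sum_subset (Finset.subset_univ B) ?_).symm
        intro i _ hi
        rw [Finset.card_eq_zero]
        by_contra h
        obtain ⟨x, hx⟩ := Finset.nonempty_iff_ne_empty.mpr h
        exact hi (Finset.mem_image.mpr ⟨⟨i, x⟩, mem_blockFinset.mp hx, rfl⟩)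
    _ ≤ ∑ j ∈ (Finset.range (r+1)).image (fun l : ℕ => i₀ + (l : ZMod (2*r+1))),
          (blockFinset S j).card := Finset.sum_le_sum_of_subset hsub
    _ = ∑ l ∈ Finset.range (r+1), (blockFinset S (i₀ + (l : ZMod (2*r+1)))).card :=
        Finset.sum_image hinj
    _ ≤ ∑ l ∈ Finset.range (r+1), maxAcy (relP (i₀ + (l : ZMod (2*r+1)))) :=
        Finset.sum_le_sum (fun l _ => card_le_maxAcy _ (block_acyclic relP hS _))
    _ ≤ _ := Finset.le_sup (f := fun i : ZMod (2*r+1) =>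
          ∑ l ∈ Finset.range (r + 1), maxAcy (relP (i + (l : ZMod (2*r+1))))) (Finset.mem_univ i₀)

end Comp


section Lower

variable {r : ℕ} {V : ZMod (2*r+1) → Type} [∀ i, Fintype (V i)]
  (relP : ∀ i, V i → V i → Prop)

lemma lower_bound (i : ZMod (2*r+1)) :
    ∃ S : Finset (Σ j, V j), AcyclicIn (compTournRel r relP) ↑S ∧
      S.card = ∑ l ∈ Finset.range (r + 1), maxAcy (relP (i + (l : ZMod (2*r+1)))) := by
  classical
  choose A hA1 hA2 using fun j => maxAcy_spec (relP j)
  set interval : Finset (ZMod (2*r+1)) :=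
    (Finset.range (r+1)).image (fun l : ℕ => i + (l : ZMod (2*r+1))) with hint
  have hintmem : ∀ j ∈ interval, ∃ l : ℕ, l ≤ r ∧ j = i + (l : ZMod (2*r+1)) := by
    intro j hj
    obtain ⟨l, hl, hlj⟩ := Finset.mem_image.mp hj
    exact ⟨l, by have := Finset.mem_range.mp hl; omega, hlj.symm⟩
  refine ⟨Finset.univ.sigma (fun j => if j ∈ interval then A j else ∅), ?_, ?_⟩
  · have hmem : ∀ u : Σ j, V j,
        u ∈ Finset.univ.sigma (fun j => if j ∈ interval then A j else ∅) →
        u.1 ∈ interval ∧ u.2 ∈ A u.1 := by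
      rintro ⟨j, x⟩ hu
      rw [Finset.mem_sigma] at hu
      by_cases h : j ∈ interval
      · exact ⟨h, by simpa [h] using hu.2⟩
      · simp [h] at hu
    rintro ⟨ju, xu⟩ hu ⟨jv, xv⟩ hv ⟨jw, xw⟩ hw huv hvw
    obtain ⟨hju, hxu⟩ := hmem _ hu
    obtain ⟨hjv, hxv⟩ := hmem _ hv
    obtain ⟨hjw, hxw⟩ := hmem _ hw
    rcases huv with ⟨h1, hrel1⟩ | ⟨hne1, hhr1⟩
    · dsimp only at h1
      subst h1
      rcases hvw with ⟨h2, hrel2⟩ | ⟨hne2, hhr2⟩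
      · dsimp only at h2
        subst h2
        exact Or.inl ⟨rfl, hA1 _ xu hxu xv hxv xw hxw hrel1 hrel2⟩
      · exact Or.inr ⟨hne2, hhr2⟩
    · rcases hvw with ⟨h2, hrel2⟩ | ⟨hne2, hhr2⟩
      · dsimp only at h2
        subst h2
        exact Or.inr ⟨hne1, hhr1⟩
      · -- both cross edges
        obtain ⟨lu, hlu, rfl⟩ := hintmem _ hju
        obtain ⟨lv, hlv, rfl⟩ := hintmem _ hjv
        obtain ⟨lw, hlw, rfl⟩ := hintmem _ hjw
        dsimp only at hhr1 hhr2 hne1 hne2 ⊢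
        have h12 : lu < lv := (hr_interval i hlu hlv).mp hhr1
        have h23 : lv < lw := (hr_interval i hlv hlw).mp hhr2
        have h13 : hrRel r (i + (lu : ZMod (2*r+1))) (i + (lw : ZMod (2*r+1))) :=
          (hr_interval i hlu hlw).mpr (by omega)
        exact Or.inr ⟨fun h => hr_irrefl _
          ((show (i + (lu : ZMod (2*r+1))) = i + (lw : ZMod (2*r+1)) from h) ▸ h13), h13⟩
  · rw [Finset.card_sigma]
    have hz : ∀ j ∈ Finset.univ, j ∉ interval →
        (if j ∈ interval then A j else ∅).card = 0 := by
      intro j _ hj; simp [hj]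
    rw [← Finset.sum_subset (Finset.subset_univ interval) hz]
    have : ∀ j ∈ interval, (if j ∈ interval then A j else ∅).card = (A j).card := by
      intro j hj; simp [hj]
    rw [Finset.sum_congr rfl this, hint]
    rw [Finset.sum_image]
    · exact Finset.sum_congr rfl (fun l _ => hA2 _)
    · intro x hx y hy h
      exact cast_inj r (by have := Finset.mem_range.mp hx; omega)
        (by have := Finset.mem_range.mp hy; omega) (add_left_cancel h)

lemma maxAcy_comp :
    maxAcy (compTournRel r relP) = Finset.univ.sup (fun i : ZMod (2*r+1) =>
      ∑ l ∈ Finset.range (r + 1), maxAcy (relP (i + (l : ZMod (2*r+1))))) := by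
  refine le_antisymm ?_ (Finset.sup_le fun i _ => ?_)
  · obtain ⟨S, hS, hcard⟩ := maxAcy_spec (compTournRel r relP)
    rw [← hcard]
    exact upper_bound relP hS
  · obtain ⟨S, hS, hcard⟩ := lower_bound relP i
    exact hcard ▸ card_le_maxAcy _ hS

end Lower

end Stmt7Aux

/-- Let `T = R_{2r+1}(P^1, …, P^{2r+1})` with `r ≥ 1` and `dim(P^i) = d_i`. Then
`dim(T) = max_i (d_i + d_{i+1} + … + d_{i+r} + r)`, indices mod `2r+1`. -/
theorem stmt7 (r : ℕ) (hr : 1 ≤ r) (V : ZMod (2 * r + 1) → Type)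
    [∀ i, Fintype (V i)] [∀ i, Nonempty (V i)]
    (relP : ∀ i, V i → V i → Prop) (htour : ∀ i, IsTournament (relP i)) :
    acyDim (compTournRel r relP) =
      Finset.univ.sup (fun i : ZMod (2 * r + 1) =>
        (∑ l ∈ Finset.range (r + 1), acyDim (relP (i + (l : ZMod (2 * r + 1))))) + r) := by

  classical
  have key := Stmt7Aux.maxAcy_comp relP
  have hdim : acyDim (compTournRel r relP) = Stmt7Aux.maxAcy (compTournRel r relP) - 1 := rfl
  rw [hdim, key]
  have hsum : ∀ i : ZMod (2*r+1),
      ∑ l ∈ Finset.range (r+1), Stmt7Aux.maxAcy (relP (i + (l : ZMod (2*r+1)))) =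
      (∑ l ∈ Finset.range (r+1), acyDim (relP (i + (l : ZMod (2*r+1))))) + (r+1) := by
    intro i
    have hm : ∀ j, Stmt7Aux.maxAcy (relP j) = acyDim (relP j) + 1 := fun j => by
      have h1 := Stmt7Aux.one_le_maxAcy (relP j)
      have h2 : acyDim (relP j) = Stmt7Aux.maxAcy (relP j) - 1 := rfl
      omega
    rw [Finset.sum_congr rfl (fun l _ => hm _), Finset.sum_add_distrib, Finset.sum_const,
      Finset.card_range, smul_eq_mul, mul_one]
  simp only [hsum]
  set f : ZMod (2*r+1) → ℕ :=
    fun i => ∑ l ∈ Finset.range (r+1), acyDim (relP (i + (l : ZMod (2*r+1)))) with hf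
  obtain ⟨i₀, -, hi₀⟩ := Finset.exists_mem_eq_sup Finset.univ Finset.univ_nonempty
    (fun i => f i + (r+1))
  have h1 : Finset.univ.sup (fun i => f i + r) = f i₀ + r := by
    refine le_antisymm (Finset.sup_le fun i _ => ?_)
      (Finset.le_sup (f := fun i => f i + r) (Finset.mem_univ i₀))
    have h2 : f i + (r+1) ≤ f i₀ + (r+1) :=
      hi₀ ▸ Finset.le_sup (f := fun i => f i + (r+1)) (Finset.mem_univ i)
    omega
  rw [hi₀, h1]
  omega
end

section
/- Let T = R_{2r+1}(P^1, …, P^{2r+1}) be the composition of tournaments P^1, …, P^{2r+1} over the highly regular tournament R_{2r+1}, with r ≥ 1, and let d_i = dim(P^i) for each i. Then dim(T) ≥ max over pairs i ≠ j in {1, …, 2r+1} of (d_i + d_j + r). -/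
lemma castInj (r : ℕ) {a b : ℕ} (ha : a < 2*r+1) (hb : b < 2*r+1)
    (h : (a : ZMod (2*r+1)) = b) : a = b := by
  have := congrArg ZMod.val h
  rwa [ZMod.val_cast_of_lt ha, ZMod.val_cast_of_lt hb] at this

lemma hr_lt {r : ℕ} (i : ZMod (2*r+1)) {la lb : ℕ} (ha : la ≤ r) (hb : lb ≤ r)
    (h : hrRel r (i + la) (i + lb)) : la < lb := by
  obtain ⟨l, hl1, hlr, heq⟩ := h
  have h2 : (lb : ZMod (2*r+1)) = ((la + l : ℕ) : ZMod (2*r+1)) := by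
    push_cast
    rw [add_assoc] at heq
    exact add_left_cancel heq
  have := castInj r (by omega) (by omega) h2
  omega

lemma hr_of_lt {r : ℕ} (i : ZMod (2*r+1)) {la lb : ℕ} (hb : lb ≤ r) (h : la < lb) :
    hrRel r (i + la) (i + lb) := by
  refine ⟨lb - la, by omega, by omega, ?_⟩
  rw [Nat.cast_sub h.le]
  ring

lemma hr_total_s8 {r : ℕ} {i j : ZMod (2*r+1)} (h : i ≠ j) :
    ∃ t : ℕ, 1 ≤ t ∧ t ≤ r ∧ (j = i + t ∨ i = j + t) := by
  set d := (j - i).val with hd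
  have hdcast : ((d : ℕ) : ZMod (2*r+1)) = j - i := ZMod.natCast_rightInverse _
  have hdlt : d < 2*r+1 := ZMod.val_lt _
  have hdpos : d ≠ 0 := by
    intro h0
    apply h
    have : j - i = 0 := by rw [← hdcast, h0]; simp
    have := sub_eq_zero.mp this
    exact this.symm
  by_cases hc : d ≤ r
  · exact ⟨d, by omega, hc, Or.inl (by rw [hdcast]; ring)⟩
  · refine ⟨2*r+1-d, by omega, by omega, Or.inr ?_⟩
    have : j = i + d := by rw [hdcast]; ring
    rw [this, add_assoc, ← Nat.cast_add]
    have : d + (2*r+1-d) = 2*r+1 := by omega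
    rw [this, ZMod.natCast_self, add_zero]

lemma exists_acyclic_max {V : Type*} [Fintype V] [Nonempty V] (rel : V → V → Prop) :
    ∃ S : Finset V, AcyclicIn rel ↑S ∧ S.card = acyDim rel + 1 := by
  set A := {n : ℕ | ∃ S : Finset V, AcyclicIn rel ↑S ∧ S.card = n} with hA
  have h1 : 1 ∈ A := by
    refine ⟨{Classical.arbitrary V}, ?_, Finset.card_singleton _⟩
    intro a ha b hb c hc h1 h2
    simp only [Finset.coe_singleton, Set.mem_singleton_iff] at ha hb hc
    subst ha; subst hb; subst hc; exact h1
  have hbdd : BddAbove A := by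
    refine ⟨Fintype.card V, fun n hn => ?_⟩
    obtain ⟨S, _, hc⟩ := hn
    simpa [← hc] using Finset.card_le_univ S
  have hmem : sSup A ∈ A := Nat.sSup_mem ⟨1, h1⟩ hbdd
  have hge : 1 ≤ sSup A := le_csSup hbdd h1
  obtain ⟨S, hS, hc⟩ := hmem
  refine ⟨S, hS, ?_⟩
  have : acyDim rel = sSup A - 1 := by rw [acyDim, ← hA]
  omega

lemma comp_irrefl {r : ℕ} {V : ZMod (2*r+1) → Type} (relP : ∀ i, V i → V i → Prop)
    (htour : ∀ i, IsTournament (relP i)) (x : Σ k, V k) : ¬ compTournRel r relP x x := by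
  rintro (⟨h, hp⟩ | ⟨hne, _⟩)
  · exact (htour x.1).1 x.2 hp
  · exact hne rfl

lemma comp_ext {r : ℕ} {V : ZMod (2*r+1) → Type} (relP : ∀ i, V i → V i → Prop)
    (k : ZMod (2*r+1)) (a b : V k)
    (h : compTournRel r relP ⟨k, a⟩ ⟨k, b⟩) : relP k a b := by
  rcases h with ⟨h, hp⟩ | ⟨hne, _⟩
  · exact hp
  · exact absurd rfl hne

lemma comp_mk {r : ℕ} {V : ZMod (2*r+1) → Type} (relP : ∀ i, V i → V i → Prop)
    (k : ZMod (2*r+1)) (a b : V k) (h : relP k a b) :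
    compTournRel r relP ⟨k, a⟩ ⟨k, b⟩ := Or.inl ⟨rfl, h⟩

lemma main_key (r : ℕ) (hr : 1 ≤ r) (V : ZMod (2 * r + 1) → Type)
    [∀ i, Fintype (V i)] [∀ i, Nonempty (V i)]
    (relP : ∀ i, V i → V i → Prop) (htour : ∀ i, IsTournament (relP i))
    (i : ZMod (2*r+1)) (t : ℕ) (ht1 : 1 ≤ t) (htr : t ≤ r) :
    acyDim (relP i) + acyDim (relP (i + (t : ZMod (2*r+1)))) + r
      ≤ acyDim (compTournRel r relP) := by
  classical
  set j : ZMod (2*r+1) := i + (t : ZMod (2*r+1)) with hj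
  -- injectivity of l ↦ i + l on [0, r]
  have inj : ∀ {a b : ℕ}, a ≤ r → b ≤ r →
      i + (a : ZMod (2*r+1)) = i + (b : ZMod (2*r+1)) → a = b := by
    intro a b ha hb h
    exact castInj r (by omega) (by omega) (add_left_cancel h)
  have hij : i ≠ j := by
    intro h
    have : i + ((0:ℕ) : ZMod (2*r+1)) = i + (t : ZMod (2*r+1)) := by
      rw [Nat.cast_zero, add_zero]; exact h
    have := inj (by omega) htr this
    omega
  obtain ⟨Si, hSi, hcSi⟩ := exists_acyclic_max (relP i)
  obtain ⟨Sj, hSj, hcSj⟩ := exists_acyclic_max (relP j)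
  set E : Finset ℕ := ((Finset.range (r+1)).erase 0).erase t with hE
  have hmemE : ∀ {l : ℕ}, l ∈ E ↔ (l ≠ t ∧ l ≠ 0 ∧ l ≤ r) := by
    intro l
    simp only [hE, Finset.mem_erase, Finset.mem_range]
    omega
  have hEcard : E.card = r - 1 := by
    rw [hE, Finset.card_erase_of_mem, Finset.card_erase_of_mem] <;>
      simp [Finset.mem_erase, Finset.mem_range] <;> omega
  set g : ℕ → Σ k, V k := fun l => ⟨i + (l : ZMod (2*r+1)), Classical.arbitrary _⟩ with hg
  set S : Finset (Σ k, V k) :=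
    (Si.map ⟨Sigma.mk i, sigma_mk_injective⟩ ∪ Sj.map ⟨Sigma.mk j, sigma_mk_injective⟩)
      ∪ E.image g with hS
  have hmem : ∀ x, x ∈ S ↔
      ((∃ v ∈ Si, (⟨i, v⟩ : Σ k, V k) = x) ∨ (∃ v ∈ Sj, (⟨j, v⟩ : Σ k, V k) = x)) ∨
        (∃ l ∈ E, g l = x) := by
    intro x
    simp only [hS, Finset.mem_union, Finset.mem_map, Finset.mem_image,
      Function.Embedding.coeFn_mk]
  -- levels
  have hlev : ∀ x ∈ S, ∃ l : ℕ, l ≤ r ∧ x.1 = i + (l : ZMod (2*r+1)) := by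
    intro x hx
    rcases (hmem x).mp hx with (⟨v, _, rfl⟩ | ⟨v, _, rfl⟩) | ⟨l, hl, rfl⟩
    · exact ⟨0, by omega, by simp⟩
    · exact ⟨t, htr, rfl⟩
    · exact ⟨l, (hmemE.mp hl).2.2, rfl⟩
  -- classification by block
  have hA1 : ∀ x ∈ S, x.1 = i → ∃ v ∈ Si, x = ⟨i, v⟩ := by
    intro x hx hx1
    rcases (hmem x).mp hx with (⟨v, hv, rfl⟩ | ⟨v, hv, rfl⟩) | ⟨l, hl, rfl⟩
    · exact ⟨v, hv, rfl⟩
    · exact absurd hx1.symm hij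
    · exfalso
      obtain ⟨hlt, hl0, hlr⟩ := hmemE.mp hl
      have : i + ((l:ℕ) : ZMod (2*r+1)) = i + ((0:ℕ) : ZMod (2*r+1)) := by
        rw [Nat.cast_zero, add_zero]; exact hx1
      exact hl0 (inj hlr (by omega) this)
  have hA2 : ∀ x ∈ S, x.1 = j → ∃ v ∈ Sj, x = ⟨j, v⟩ := by
    intro x hx hx1
    rcases (hmem x).mp hx with (⟨v, hv, rfl⟩ | ⟨v, hv, rfl⟩) | ⟨l, hl, rfl⟩
    · exact absurd hx1 hij
    · exact ⟨v, hv, rfl⟩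
    · exfalso
      obtain ⟨hlt, hl0, hlr⟩ := hmemE.mp hl
      exact hlt (inj hlr htr hx1)
  have hA3 : ∀ x ∈ S, ∀ l ∈ E, x.1 = i + (l : ZMod (2*r+1)) → x = g l := by
    intro x hx l hl hx1
    obtain ⟨hlt, hl0, hlr⟩ := hmemE.mp hl
    rcases (hmem x).mp hx with (⟨v, hv, rfl⟩ | ⟨v, hv, rfl⟩) | ⟨l', hl', rfl⟩
    · exfalso
      have : i + ((0:ℕ) : ZMod (2*r+1)) = i + ((l:ℕ) : ZMod (2*r+1)) := by
        simpa using hx1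
      exact hl0 (inj (by omega) hlr this).symm
    · exact absurd (inj htr hlr hx1) (Ne.symm hlt)
    · have := inj (hmemE.mp hl').2.2 hlr hx1
      rw [this]
  -- acyclicity
  have hacy : AcyclicIn (compTournRel r relP) ↑S := by
    intro a ha b hb c hc hab hbc
    obtain ⟨la, hlar, hla⟩ := hlev a ha
    obtain ⟨lb, hlbr, hlb⟩ := hlev b hb
    obtain ⟨lc, hlcr, hlc⟩ := hlev c hc
    by_cases h1 : a.1 = b.1
    · by_cases h2 : b.1 = c.1
      · -- all in the same block
        have hk : a.1 = i + (la : ZMod (2*r+1)) := hla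
        by_cases hc0 : la = 0
        · -- block i
          have hai : a.1 = i := by rw [hla, hc0]; simp
          obtain ⟨va, hva, rfl⟩ := hA1 a ha hai
          obtain ⟨vb, hvb, rfl⟩ := hA1 b hb (h1 ▸ hai)
          obtain ⟨vc, hvc, rfl⟩ := hA1 c hc (h2 ▸ h1 ▸ hai)
          exact comp_mk relP i va vc
            (hSi va hva vb hvb vc hvc (comp_ext relP i va vb hab) (comp_ext relP i vb vc hbc))
        · by_cases hct : la = t
          · -- block j
            have haj : a.1 = j := by rw [hla, hct]
            obtain ⟨va, hva, rfl⟩ := hA2 a ha haj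
            obtain ⟨vb, hvb, rfl⟩ := hA2 b hb (h1 ▸ haj)
            obtain ⟨vc, hvc, rfl⟩ := hA2 c hc (h2 ▸ h1 ▸ haj)
            exact comp_mk relP j va vc
              (hSj va hva vb hvb vc hvc (comp_ext relP j va vb hab) (comp_ext relP j vb vc hbc))
          · -- singleton block: a = b, contradiction with hab
            have hlE : la ∈ E := hmemE.mpr ⟨hct, hc0, hlar⟩
            have hxa := hA3 a ha la hlE hla
            have hxb := hA3 b hb la hlE (h1 ▸ hla)
            rw [hxa, hxb] at hab
            exact absurd hab (comp_irrefl relP htour _)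
      · -- a.1 = b.1 ≠ c.1 : edge b → c is cross-block
        rcases hbc with ⟨h, _⟩ | ⟨hne, hhr⟩
        · exact absurd h h2
        · exact Or.inr ⟨h1 ▸ hne, h1 ▸ hhr⟩
    · by_cases h2 : b.1 = c.1
      · rcases hab with ⟨h, _⟩ | ⟨hne, hhr⟩
        · exact absurd h h1
        · exact Or.inr ⟨h2 ▸ hne, h2 ▸ hhr⟩
      · -- both cross-block
        have hab' : la < lb := by
          rcases hab with ⟨h, _⟩ | ⟨_, hhr⟩
          · exact absurd h h1
          · exact hr_lt i hlar hlbr (hla ▸ hlb ▸ hhr)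
        have hbc' : lb < lc := by
          rcases hbc with ⟨h, _⟩ | ⟨_, hhr⟩
          · exact absurd h h2
          · exact hr_lt i hlbr hlcr (hlb ▸ hlc ▸ hhr)
        refine Or.inr ⟨?_, ?_⟩
        · intro h
          rw [hla, hlc] at h
          have := inj hlar hlcr h
          omega
        · rw [hla, hlc]
          exact hr_of_lt i hlcr (by omega)
  -- cardinality
  have hfst1 : ∀ x ∈ Si.map ⟨Sigma.mk i, sigma_mk_injective⟩, Sigma.fst x = i := by
    intro x hx
    obtain ⟨v, _, rfl⟩ := Finset.mem_map.mp hx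
    rfl
  have hfst2 : ∀ x ∈ Sj.map ⟨Sigma.mk j, sigma_mk_injective⟩, Sigma.fst x = j := by
    intro x hx
    obtain ⟨v, _, rfl⟩ := Finset.mem_map.mp hx
    rfl
  have hd1 : Disjoint (Si.map ⟨Sigma.mk i, sigma_mk_injective⟩)
      (Sj.map ⟨Sigma.mk j, sigma_mk_injective⟩) := by
    rw [Finset.disjoint_left]
    intro x hx hx'
    exact hij ((hfst1 x hx).symm.trans (hfst2 x hx'))
  have hd2 : Disjoint (Si.map ⟨Sigma.mk i, sigma_mk_injective⟩ ∪
      Sj.map ⟨Sigma.mk j, sigma_mk_injective⟩) (E.image g) := by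
    rw [Finset.disjoint_left]
    intro x hx hx'
    obtain ⟨l, hl, rfl⟩ := Finset.mem_image.mp hx'
    obtain ⟨hlt, hl0, hlr⟩ := hmemE.mp hl
    rcases Finset.mem_union.mp hx with hx1 | hx1
    · have : i + ((l:ℕ) : ZMod (2*r+1)) = i + ((0:ℕ) : ZMod (2*r+1)) := by
        rw [Nat.cast_zero, add_zero]; exact hfst1 _ hx1
      exact hl0 (inj hlr (by omega) this)
    · exact hlt (inj hlr htr (hfst2 _ hx1))
  have hcimg : (E.image g).card = E.card := by
    apply Finset.card_image_of_injOn
    intro a haE b hbE h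
    have := congrArg Sigma.fst h
    exact inj (hmemE.mp haE).2.2 (hmemE.mp hbE).2.2 this
  have hcard : S.card = acyDim (relP i) + acyDim (relP j) + r + 1 := by
    rw [hS, Finset.card_union_of_disjoint hd2, Finset.card_union_of_disjoint hd1,
      Finset.card_map, Finset.card_map, hcimg, hEcard, hcSi, hcSj]
    omega
  -- conclude
  set B := {n : ℕ | ∃ S : Finset (Σ k, V k),
      AcyclicIn (compTournRel r relP) ↑S ∧ S.card = n} with hB
  have hBmem : acyDim (relP i) + acyDim (relP j) + r + 1 ∈ B := ⟨S, hacy, hcard⟩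
  have hBbdd : BddAbove B := by
    refine ⟨Fintype.card (Σ k, V k), fun n hn => ?_⟩
    obtain ⟨S', _, hc⟩ := hn
    simpa [← hc] using Finset.card_le_univ S'
  have hle : acyDim (relP i) + acyDim (relP j) + r + 1 ≤ sSup B := le_csSup hBbdd hBmem
  have : acyDim (compTournRel r relP) = sSup B - 1 := by rw [acyDim, ← hB]
  omega

/-- Let `T = R_{2r+1}(P^1, …, P^{2r+1})` with `r ≥ 1` and `dim(P^i) = d_i`. Then
`dim(T) ≥ max_{i ≠ j} (d_i + d_j + r)`. -/
theorem stmt8 (r : ℕ) (hr : 1 ≤ r) (V : ZMod (2 * r + 1) → Type)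
    [∀ i, Fintype (V i)] [∀ i, Nonempty (V i)]
    (relP : ∀ i, V i → V i → Prop) (htour : ∀ i, IsTournament (relP i)) :
    ∀ i j : ZMod (2 * r + 1), i ≠ j →
      acyDim (relP i) + acyDim (relP j) + r ≤ acyDim (compTournRel r relP) := by
  intro i j hij
  obtain ⟨t, ht1, htr, hcase⟩ := hr_total_s8 hij
  rcases hcase with h | h
  · subst h
    exact main_key r hr V relP htour i t ht1 htr
  · subst h
    have := main_key r hr V relP htour j t ht1 htr
    omega
end

section
/- Let T = R_{2r+1}(P^1, …, P^{2r+1}) be the composition of tournaments P^1, …, P^{2r+1} over the highly regular tournament R_{2r+1}, with r ≥ 1. If χ(P^i) = k for every 1 ≤ i ≤ 2r+1, then χ(T) ≤ ⌈k(2r+1)/(r+1)⌉. -/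
/-- Let `T = R_{2r+1}(P^1, …, P^{2r+1})` with `r ≥ 1`. If `χ(P^i) = k` for every `i`,
then `χ(T) ≤ ⌈k(2r+1)/(r+1)⌉`. -/
theorem stmt9 (r k : ℕ) (hr : 1 ≤ r) (V : ZMod (2 * r + 1) → Type)
    [∀ i, Fintype (V i)] [∀ i, Nonempty (V i)]
    (relP : ∀ i, V i → V i → Prop) (htour : ∀ i, IsTournament (relP i))
    (hchi : ∀ i, chromaticNumber (relP i) = k) :
    (chromaticNumber (compTournRel r relP) : ℤ) ≤
      ⌈((k : ℚ) * (2 * r + 1)) / (r + 1)⌉ := by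
  classical
  haveI : NeZero (2 * r + 1) := ⟨by omega⟩
  -- obtain optimal colorings of each block
  have hcol : ∀ i, ∃ cc : V i → Fin k, ∀ j : Fin k, AcyclicIn (relP i) {v | cc v = j} := by
    intro i
    have hne : {n : ℕ | ∃ cc : V i → Fin n, ∀ j : Fin n,
        AcyclicIn (relP i) {v | cc v = j}}.Nonempty := by
      refine ⟨Fintype.card (V i), ⇑(Fintype.equivFin (V i)), ?_⟩
      intro j a ha b hb c hc h1 _
      have hab : a = b := (Fintype.equivFin (V i)).injective (ha.trans hb.symm)
      subst hab
      exact absurd h1 ((htour i).1 a)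
    have hmem := Nat.sInf_mem hne
    rwa [show sInf {n : ℕ | ∃ cc : V i → Fin n, ∀ j : Fin n,
        AcyclicIn (relP i) {v | cc v = j}} = k from hchi i] at hmem
  choose cP hcP using hcol
  have hk : 0 < k := (cP 0 (Classical.arbitrary (V 0))).pos
  -- the index function
  set s : (Σ i, V i) → ℕ := fun v => (2 * r + 1) * (cP v.1 v.2).val + (v.1).val with hsdef
  have hscast : ∀ v : Σ i, V i, ((s v : ℕ) : ZMod (2 * r + 1)) = v.1 := by
    intro v
    rw [hsdef]
    simp only []
    rw [Nat.cast_add, Nat.cast_mul, ZMod.natCast_self, zero_mul, zero_add,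
      ZMod.natCast_val, ZMod.cast_id]
  have hslt : ∀ v : Σ i, V i, s v < (2 * r + 1) * k := by
    intro v
    have h1 : s v < (2 * r + 1) * ((cP v.1 v.2).val + 1) := by
      rw [Nat.mul_succ]
      exact Nat.add_lt_add_left (ZMod.val_lt _) _
    exact h1.trans_le (Nat.mul_le_mul_left _ (cP v.1 v.2).isLt)
  set t : ℕ := (k * (2 * r + 1) + r) / (r + 1) with htdef
  have hNt : k * (2 * r + 1) ≤ (r + 1) * t := by
    have hd := Nat.div_add_mod (k * (2 * r + 1) + r) (r + 1)
    have h3 : (k * (2 * r + 1) + r) % (r + 1) ≤ r :=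
      Nat.lt_succ_iff.mp (Nat.mod_lt _ (by omega))
    rw [← htdef] at hd
    have h4 : k * (2 * r + 1) + r ≤ (r + 1) * t + r := by
      calc k * (2 * r + 1) + r = (r + 1) * t + (k * (2 * r + 1) + r) % (r + 1) := hd.symm
      _ ≤ (r + 1) * t + r := Nat.add_le_add_left h3 _
    exact Nat.le_of_add_le_add_right h4
  have hcfin : ∀ v : Σ i, V i, s v / (r + 1) < t := by
    intro v
    rw [Nat.div_lt_iff_lt_mul (by omega : 0 < r + 1)]
    calc s v < (2 * r + 1) * k := hslt v
      _ = k * (2 * r + 1) := Nat.mul_comm _ _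
      _ ≤ (r + 1) * t := hNt
      _ = t * (r + 1) := Nat.mul_comm _ _
  -- window lemma : same window and smaller s ⇒ gap at most r
  have hwin : ∀ u v : Σ i, V i, s u / (r + 1) = s v / (r + 1) → s u ≤ s v →
      s v - s u ≤ r := by
    intro u v hq hle
    obtain ⟨B, hB⟩ : ∃ B, (r + 1) * (s v / (r + 1)) = B := ⟨_, rfl⟩
    obtain ⟨M1, hM1⟩ : ∃ M1, s u % (r + 1) = M1 := ⟨_, rfl⟩
    obtain ⟨M2, hM2⟩ : ∃ M2, s v % (r + 1) = M2 := ⟨_, rfl⟩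
    have h1 := Nat.div_add_mod (s u) (r + 1)
    have h2 := Nat.div_add_mod (s v) (r + 1)
    have h3 : s u % (r + 1) < r + 1 := Nat.mod_lt _ (by omega)
    have h4 : s v % (r + 1) < r + 1 := Nat.mod_lt _ (by omega)
    rw [hq, hB, hM1] at h1
    rw [hB, hM2] at h2
    rw [hM1] at h3
    rw [hM2] at h4
    omega
  -- equal blocks in the same window force equal s values
  have hzero : ∀ u v : Σ i, V i, s u / (r + 1) = s v / (r + 1) → s u ≤ s v →
      u.1 = v.1 → s u = s v := by
    intro u v hq hle h1
    have hd : s v - s u ≤ r := hwin u v hq hle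
    have hz : ((s v - s u : ℕ) : ZMod (2 * r + 1)) = 0 := by
      have hcast : ((s u + (s v - s u) : ℕ) : ZMod (2 * r + 1)) = ((s u : ℕ) : ZMod (2 * r + 1)) := by
        rw [show s u + (s v - s u) = s v by omega, hscast, hscast, h1]
      rw [Nat.cast_add] at hcast
      exact left_eq_add.mp hcast.symm
    have : (s v - s u) = ((((s v - s u : ℕ)) : ZMod (2 * r + 1))).val :=
      (ZMod.val_cast_of_lt (by omega)).symm
    rw [hz, ZMod.val_zero] at this
    omega
  -- antisymmetry of hrRel
  have hranti : ∀ i j : ZMod (2 * r + 1), hrRel r i j → hrRel r j i → False := by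
    rintro i j ⟨l1, hl11, hl12, rfl⟩ ⟨l2, hl21, hl22, hji⟩
    have hsum : ((l1 + l2 : ℕ) : ZMod (2 * r + 1)) = 0 := by
      rw [Nat.cast_add]
      have : i = i + ((l1 : ZMod (2 * r + 1)) + l2) := by
        rw [← add_assoc]; exact hji
      exact (left_eq_add.mp this)
    have : l1 + l2 = ((((l1 + l2 : ℕ)) : ZMod (2 * r + 1))).val :=
      (ZMod.val_cast_of_lt (by omega)).symm
    rw [hsum, ZMod.val_zero] at this
    omega
  -- key lemma: same window and strictly smaller s ⇒ hr edge
  have hkey : ∀ u v : Σ i, V i, s u / (r + 1) = s v / (r + 1) → s u < s v →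
      u.1 ≠ v.1 ∧ hrRel r u.1 v.1 := by
    intro u v hq hlt
    have hd : s v - s u ≤ r := hwin u v hq hlt.le
    have hne : u.1 ≠ v.1 := by
      intro h1
      have := hzero u v hq hlt.le h1
      omega
    refine ⟨hne, ⟨s v - s u, by omega, hd, ?_⟩⟩
    have h5 : ((s u + (s v - s u) : ℕ) : ZMod (2 * r + 1)) = u.1 + ((s v - s u : ℕ) : ZMod (2 * r + 1)) := by
      rw [Nat.cast_add, hscast]
    rw [show s u + (s v - s u) = s v from by omega, hscast] at h5
    exact h5
  -- one step: an edge within a window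
  have hstep : ∀ u v : Σ i, V i, s u / (r + 1) = s v / (r + 1) →
      compTournRel r relP u v →
      (u.1 = v.1 ∧ s u = s v) ∨ (u.1 ≠ v.1 ∧ s u < s v) := by
    intro u v hq hrel
    rcases hrel with ⟨h1, _⟩ | ⟨hne, hhr⟩
    · left
      refine ⟨h1, ?_⟩
      rcases le_total (s u) (s v) with h | h
      · exact hzero u v hq h h1
      · exact (hzero v u hq.symm h h1.symm).symm
    · right
      refine ⟨hne, ?_⟩
      rcases Nat.lt_trichotomy (s u) (s v) with h | h | h
      · exact h
      · exact absurd (show u.1 = v.1 by rw [← hscast u, h, hscast v]) hne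
      · exact absurd hhr (fun hh => hranti _ _ hh (hkey v u hq.symm h).2)
  -- acyclicity of each color class of the composed coloring
  have hacyc : ∀ g : Fin t, AcyclicIn (compTournRel r relP)
      {v | (⟨s v / (r + 1), hcfin v⟩ : Fin t) = g} := by
    intro g a ha b hb c2 hc2 hab hbc
    have ha' : (⟨s a / (r + 1), hcfin a⟩ : Fin t) = g := ha
    have hb' : (⟨s b / (r + 1), hcfin b⟩ : Fin t) = g := hb
    have hc' : (⟨s c2 / (r + 1), hcfin c2⟩ : Fin t) = g := hc2
    have hqab : s a / (r + 1) = s b / (r + 1) := congrArg Fin.val (ha'.trans hb'.symm)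
    have hqbc : s b / (r + 1) = s c2 / (r + 1) := congrArg Fin.val (hb'.trans hc'.symm)
    rcases hstep a b hqab hab with ⟨he1, hs1⟩ | ⟨hne1, hlt1⟩
    · rcases hstep b c2 hqbc hbc with ⟨he2, hs2⟩ | ⟨hne2, hlt2⟩
      · -- all three vertices in the same block
        rcases hab with ⟨h1, hrel1⟩ | ⟨hne1', _⟩
        · rcases hbc with ⟨h2, hrel2⟩ | ⟨hne2', _⟩
          · obtain ⟨ia, xa⟩ := a
            obtain ⟨ib, xb⟩ := b
            obtain ⟨ic, xc⟩ := c2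
            dsimp only at h1 h2
            subst h1
            subst h2
            have hrel1' : relP ia xa xb := hrel1
            have hrel2' : relP ia xb xc := hrel2
            have hs1' : (2 * r + 1) * (cP ia xa).val + ia.val
                = (2 * r + 1) * (cP ia xb).val + ia.val := hs1
            have hs2' : (2 * r + 1) * (cP ia xb).val + ia.val
                = (2 * r + 1) * (cP ia xc).val + ia.val := hs2
            have hv1 : (cP ia xa).val = (cP ia xb).val :=
              Nat.eq_of_mul_eq_mul_left (by omega) (Nat.add_right_cancel hs1')
            have hv2 : (cP ia xb).val = (cP ia xc).val :=
              Nat.eq_of_mul_eq_mul_left (by omega) (Nat.add_right_cancel hs2')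
            have hc1 : cP ia xb = cP ia xa := Fin.eq_of_val_eq hv1.symm
            have hc2' : cP ia xc = cP ia xa := Fin.eq_of_val_eq (hv2.symm.trans hv1.symm)
            have hfinal : relP ia xa xc :=
              hcP ia (cP ia xa) xa rfl xb hc1 xc hc2' hrel1' hrel2'
            exact Or.inl ⟨rfl, hfinal⟩
          · exact absurd he2 hne2'
        · exact absurd he1 hne1'
      · obtain ⟨hne, hhr⟩ := hkey a c2 (hqab.trans hqbc) (by omega)
        exact Or.inr ⟨hne, hhr⟩
    · rcases hstep b c2 hqbc hbc with ⟨he2, hs2⟩ | ⟨hne2, hlt2⟩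
      · obtain ⟨hne, hhr⟩ := hkey a c2 (hqab.trans hqbc) (by omega)
        exact Or.inr ⟨hne, hhr⟩
      · obtain ⟨hne, hhr⟩ := hkey a c2 (hqab.trans hqbc) (by omega)
        exact Or.inr ⟨hne, hhr⟩
  have hchrom : chromaticNumber (compTournRel r relP) ≤ t :=
    Nat.sInf_le ⟨fun v => ⟨s v / (r + 1), hcfin v⟩, hacyc⟩
  have hfin : (t : ℤ) ≤ ⌈((k : ℚ) * (2 * r + 1)) / (r + 1)⌉ := by
    rw [Int.le_ceil_iff, lt_div_iff₀ (by positivity)]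
    have hmul : t * (r + 1) ≤ k * (2 * r + 1) + r := Nat.div_mul_le_self _ _
    have hmul' : (t : ℚ) * ((r : ℚ) + 1) ≤ (k : ℚ) * (2 * (r : ℚ) + 1) + (r : ℚ) := by
      exact_mod_cast hmul
    push_cast
    nlinarith [hmul']
  exact le_trans (by exact_mod_cast hchrom) hfin
end

section
/- Let T = R_{2r+1}(P^1, …, P^{2r+1}) be the composition of tournaments P^1, …, P^{2r+1} over the highly regular tournament R_{2r+1}, with r ≥ 1, and let χ(P^i) = k_i for each i. Suppose there are indices s and t such that k_s > k_t and k_t ≥ k_ℓ for every ℓ ∈ {1, …, 2r+1} \ {s, t}. Then χ(T) ≤ max { ⌈((2r+1)(k_s + k_t) − 1)/(2r+2)⌉ , k_s }. -/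
open Finset

lemma count_split (A B : ℕ) (P : ℕ → Prop) [DecidablePred P] :
    ((range (A + B)).filter P).card
      = ((range A).filter P).card + ((range B).filter (fun j => P (A + j))).card := by
  induction B with
  | zero => simp
  | succ B ih =>
    rw [show A + (B + 1) = (A + B) + 1 by omega, range_add_one, filter_insert, range_add_one,
      filter_insert]
    by_cases h : P (A + B)
    · rw [if_pos h, if_pos h, card_insert_of_notMem (by simp), card_insert_of_notMem (by simp),
        ih]
      omega
    · rw [if_neg h, if_neg h, ih]

lemma count_true (B : ℕ) (P : ℕ → Prop) [DecidablePred P] (h : ∀ j < B, P j) :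
    ((range B).filter P).card = B := by
  rw [filter_true_of_mem (fun x hx => h x (mem_range.mp hx)), card_range]

lemma count_mod (m q : ℕ) (P : ℕ → Prop) [DecidablePred P] :
    ((range (q * m)).filter (fun v => P (v % m))).card = q * ((range m).filter P).card := by
  induction q with
  | zero => simp
  | succ q ih =>
    rw [show (q + 1) * m = q * m + m by ring, count_split, ih]
    have h2 : ((range m).filter (fun j => P ((q * m + j) % m))).card
        = ((range m).filter P).card := by
      apply congrArg
      apply filter_congr
      intro j hj
      rw [show q * m + j = j + q * m by omega, Nat.add_mul_mod_self_right,
        Nat.mod_eq_of_lt (mem_range.mp hj)]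
    rw [h2, Nat.succ_mul]

lemma count_window (r : ℕ) (i : ZMod (2 * r + 1)) :
    ((range (2 * r + 1)).filter (fun (w : ℕ) => (i - (w : ZMod (2 * r + 1))).val ≤ r)).card
      = r + 1 := by
  have key : ∀ x : ZMod (2 * r + 1), ((x.val : ℕ) : ZMod (2 * r + 1)) = x :=
    ZMod.natCast_rightInverse
  rw [show r + 1 = (range (r + 1)).card from (card_range _).symm]
  apply card_bij' (fun (w : ℕ) _ => (i - (w : ZMod (2 * r + 1))).val)
      (fun (d : ℕ) _ => (i - (d : ZMod (2 * r + 1))).val)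
  · intro w hw
    simp only [mem_filter, mem_range] at hw ⊢
    omega
  · intro d hd
    simp only [mem_range] at hd
    simp only [mem_filter, mem_range]
    refine ⟨ZMod.val_lt _, ?_⟩
    have h3 : (i - (((i - (d : ZMod (2 * r + 1))).val : ℕ) : ZMod (2 * r + 1)))
        = (d : ZMod (2 * r + 1)) := by rw [key]; ring
    rw [h3, ZMod.val_cast_of_lt (by omega)]
    omega
  · intro w hw
    simp only [mem_filter, mem_range] at hw
    have h3 : (i - (((i - (w : ZMod (2 * r + 1))).val : ℕ) : ZMod (2 * r + 1)))
        = (w : ZMod (2 * r + 1)) := by rw [key]; ring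
    rw [h3, ZMod.val_cast_of_lt hw.1]
  · intro d hd
    simp only [mem_range] at hd
    have h3 : (i - (((i - (d : ZMod (2 * r + 1))).val : ℕ) : ZMod (2 * r + 1)))
        = (d : ZMod (2 * r + 1)) := by rw [key]; ring
    rw [h3, ZMod.val_cast_of_lt (by omega)]

lemma count_uniform (r q : ℕ) (i : ZMod (2 * r + 1)) :
    ((range (q * (2 * r + 1))).filter
      (fun (v : ℕ) => (i - (v : ZMod (2 * r + 1))).val ≤ r)).card = q * (r + 1) := by
  have h1 : ((range (q * (2 * r + 1))).filter
        (fun (v : ℕ) => (i - (v : ZMod (2 * r + 1))).val ≤ r))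
      = ((range (q * (2 * r + 1))).filter
        (fun (v : ℕ) => (i - ((v % (2 * r + 1) : ℕ) : ZMod (2 * r + 1))).val ≤ r)) := by
    apply filter_congr
    intro v _
    rw [ZMod.natCast_mod]
  rw [h1]
  exact (count_mod (2 * r + 1) q
      (fun (w : ℕ) => (i - (w : ZMod (2 * r + 1))).val ≤ r)).trans
    (by rw [count_window r i])


-- part2: hrRel order lemmas, pair_cover, exists_coloring, chrom_le
lemma hrRel_of_lt {r : ℕ} {x i j : ZMod (2 * r + 1)} (hj : (j - x).val ≤ r)
    (hlt : (i - x).val < (j - x).val) : hrRel r i j := by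
  have key : ∀ y : ZMod (2 * r + 1), ((y.val : ℕ) : ZMod (2 * r + 1)) = y :=
    ZMod.natCast_rightInverse
  refine ⟨(j - x).val - (i - x).val, by omega, by omega, ?_⟩
  rw [Nat.cast_sub hlt.le, key, key]
  ring

lemma hrRel_iff {r : ℕ} {x i j : ZMod (2 * r + 1)} (hi : (i - x).val ≤ r)
    (hj : (j - x).val ≤ r) (hij : i ≠ j) :
    hrRel r i j ↔ (i - x).val < (j - x).val := by
  have key : ∀ y : ZMod (2 * r + 1), ((y.val : ℕ) : ZMod (2 * r + 1)) = y :=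
    ZMod.natCast_rightInverse
  constructor
  · intro h
    rcases lt_trichotomy ((i - x).val) ((j - x).val) with h1 | h1 | h1
    · exact h1
    · exfalso
      apply hij
      have h2 : i - x = j - x := by rw [← key (i - x), ← key (j - x), h1]
      exact sub_left_inj.mp h2
    · exfalso
      obtain ⟨l, hl1, hlr, hje⟩ := h
      obtain ⟨l', hl1', hlr', hie⟩ := hrRel_of_lt hi h1
      rw [hie] at hje
      have h0 : ((l' + l : ℕ) : ZMod (2 * r + 1)) = 0 := by
        push_cast
        linear_combination -hje
      have h4 : (l' + l) % (2 * r + 1) = 0 := by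
        have h5 := congrArg ZMod.val h0
        rwa [ZMod.val_natCast, ZMod.val_zero] at h5
      rw [Nat.mod_eq_of_lt (by omega)] at h4
      omega
  · exact hrRel_of_lt hj

lemma pair_cover (r : ℕ) (y p : ZMod (2 * r + 1)) :
    (p - (y - (r : ZMod (2 * r + 1)))).val ≤ r ∨ (p - y).val ≤ r := by
  by_cases h : (p - y).val ≤ r
  · exact Or.inr h
  · left
    have hlt : (p - y).val < 2 * r + 1 := ZMod.val_lt _
    have key : ∀ z : ZMod (2 * r + 1), ((z.val : ℕ) : ZMod (2 * r + 1)) = z :=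
      ZMod.natCast_rightInverse
    have h1 : p - (y - (r : ZMod (2 * r + 1)))
        = (((p - y).val + r : ℕ) : ZMod (2 * r + 1)) := by
      push_cast
      rw [key]
      ring
    rw [h1, ZMod.val_natCast]
    have h2 : ((p - y).val + r) % (2 * r + 1) = (p - y).val + r - (2 * r + 1) := by
      rw [Nat.mod_eq_sub_mod (by omega), Nat.mod_eq_of_lt (by omega)]
    omega

lemma exists_coloring {W : Type} [Fintype W] (rel : W → W → Prop) :
    ∃ c : W → Fin (chromaticNumber rel), ∀ i, AcyclicIn rel {v | c v = i} := by
  classical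
  have hne : {n : ℕ | ∃ c : W → Fin n, ∀ i : Fin n, AcyclicIn rel {v | c v = i}}.Nonempty := by
    refine ⟨Fintype.card W, Fintype.equivFin W, fun i a ha b hb c hc hab hbc => ?_⟩
    have hba : b = a := (Fintype.equivFin W).injective (hb.trans ha.symm)
    rw [hba] at hbc
    exact hbc
  exact Nat.sInf_mem hne

lemma chrom_le (r : ℕ) {V : ZMod (2 * r + 1) → Type} (relP : ∀ i, V i → V i → Prop)
    (k : ZMod (2 * r + 1) → ℕ)
    (colP : ∀ i, ∃ c : V i → Fin (k i), ∀ col, AcyclicIn (relP i) {v | c v = col})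
    (N : ℕ) (start : ℕ → ZMod (2 * r + 1))
    (hcov : ∀ i, k i ≤ ((range N).filter (fun col => (i - start col).val ≤ r)).card) :
    chromaticNumber (compTournRel r relP) ≤ N := by
  classical
  choose cP hcP using colP
  set Cov : ZMod (2 * r + 1) → Finset (Fin N) :=
    fun i => univ.filter (fun col : Fin N => (i - start col.val).val ≤ r) with hCov
  have hcard : ∀ i, k i ≤ (Cov i).card := by
    intro i
    refine (hcov i).trans (le_of_eq ?_)
    rw [hCov, card_filter, card_filter, ← Fin.sum_univ_eq_sum_range]
  set φ : ∀ i, Fin (k i) → Fin N := fun i => (Cov i).orderEmbOfCardLe (hcard i) with hφ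
  have hφinj : ∀ i, Function.Injective (φ i) :=
    fun i => ((Cov i).orderEmbOfCardLe (hcard i)).injective
  have hφmem : ∀ i j, (i - start (φ i j).val).val ≤ r := by
    intro i j
    have h := Finset.orderEmbOfCardLe_mem (Cov i) (hcard i) j
    exact (Finset.mem_filter.mp h).2
  have hmem : N ∈ {n : ℕ | ∃ c : (Σ i, V i) → Fin n,
      ∀ col : Fin n, AcyclicIn (compTournRel r relP) {v | c v = col}} := by
    refine ⟨fun u => φ u.1 (cP u.1 u.2), ?_⟩
    intro col
    rintro ⟨ia, va⟩ ha ⟨ib, vb⟩ hb ⟨ic, vc⟩ hc hab hbc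
    simp only [Set.mem_setOf_eq] at ha hb hc
    have covA : (ia - start col.val).val ≤ r := ha ▸ hφmem ia (cP ia va)
    have covB : (ib - start col.val).val ≤ r := hb ▸ hφmem ib (cP ib vb)
    have covC : (ic - start col.val).val ≤ r := hc ▸ hφmem ic (cP ic vc)
    by_cases h1 : ia = ib
    · subst h1
      by_cases h2 : ia = ic
      · subst h2
        have rab : relP ia va vb := by
          cases hab with
          | inl h => exact h.2
          | inr h => exact absurd rfl h.1
        have rbc : relP ia vb vc := by
          cases hbc with
          | inl h => exact h.2
          | inr h => exact absurd rfl h.1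
        have eqab : cP ia va = cP ia vb := hφinj ia (ha.trans hb.symm)
        have eqbc : cP ia vb = cP ia vc := hφinj ia (hb.trans hc.symm)
        have rac : relP ia va vc :=
          hcP ia (cP ia va) va rfl vb eqab.symm vc (eqbc.symm.trans eqab.symm) rab rbc
        exact Or.inl ⟨rfl, rac⟩
      · cases hbc with
        | inl h => exact absurd h.1 h2
        | inr h => exact Or.inr ⟨h2, h.2⟩
    · have hrab : hrRel r ia ib := by
        cases hab with
        | inl h => exact absurd h.1 h1
        | inr h => exact h.2
      by_cases h2 : ib = ic
      · subst h2
        exact Or.inr ⟨h1, hrab⟩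
      · have hrbc : hrRel r ib ic := by
          cases hbc with
          | inl h => exact absurd h.1 h2
          | inr h => exact h.2
        have oab := (hrRel_iff covA covB h1).mp hrab
        have obc := (hrRel_iff covB covC h2).mp hrbc
        have h3 : ia ≠ ic := by
          intro he
          rw [he] at oab
          omega
        exact Or.inr ⟨h3, hrRel_of_lt covC (oab.trans obc)⟩
  exact Nat.sInf_le hmem


/-- Let `T = R_{2r+1}(P^1, …, P^{2r+1})` with `r ≥ 1` and `χ(P^i) = k_i`. If there are
indices `s, t` with `k_s > k_t` and `k_t ≥ k_ℓ` for all other `ℓ`, then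
`χ(T) ≤ max { ⌈((2r+1)(k_s + k_t) − 1)/(2r+2)⌉ , k_s }`. -/
theorem stmt10 (r : ℕ) (hr : 1 ≤ r) (V : ZMod (2 * r + 1) → Type)
    [∀ i, Fintype (V i)] [∀ i, Nonempty (V i)]
    (relP : ∀ i, V i → V i → Prop) (htour : ∀ i, IsTournament (relP i))
    (k : ZMod (2 * r + 1) → ℕ) (hk : ∀ i, chromaticNumber (relP i) = k i)
    (s t : ZMod (2 * r + 1)) (hst : k t < k s)
    (hmax : ∀ l, l ≠ s → l ≠ t → k l ≤ k t) :
    (chromaticNumber (compTournRel r relP) : ℤ) ≤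
      max ⌈((2 * r + 1 : ℚ) * ((k s : ℚ) + k t) - 1) / (2 * r + 2)⌉ (k s : ℤ) := by
  classical
  have colP : ∀ i, ∃ c : V i → Fin (k i), ∀ col, AcyclicIn (relP i) {v | c v = col} := by
    intro i
    have h := exists_coloring (relP i)
    rw [hk i] at h
    exact h
  have hkb : ∀ i, i ≠ s → k i ≤ k t := by
    intro i his
    by_cases hit : i = t
    · rw [hit]
    · exact hmax i his hit
  by_cases hcase : 2 * k t ≤ k s
  · -- Case 1 : k s ≥ 2 k t, use N = k s colors all covering block s
    have hchrom : chromaticNumber (compTournRel r relP) ≤ k s := by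
      apply chrom_le r relP k colP (k s)
        (fun n => if n < k t then s - (r : ZMod (2 * r + 1)) else s)
      intro i
      have hsplit := count_split (k t) (k s - k t)
        (fun col => (i - (if col < k t then s - (r : ZMod (2 * r + 1)) else s)).val ≤ r)
      rw [show k t + (k s - k t) = k s by omega] at hsplit
      rw [hsplit]
      by_cases his : i = s
      · have hcL : (i - (s - (r : ZMod (2 * r + 1)))).val ≤ r := by
          rw [his]
          have h9 : s - (s - (r : ZMod (2 * r + 1))) = (r : ZMod (2 * r + 1)) := by ring
          rw [h9, ZMod.val_cast_of_lt (by omega)]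
        have hcR : (i - s).val ≤ r := by
          rw [his, sub_self, ZMod.val_zero]
          omega
        have e1 : ((range (k t)).filter
            (fun col => (i - (if col < k t then s - (r : ZMod (2 * r + 1)) else s)).val ≤ r)).card
              = k t :=
          count_true _ _ (fun j hj => by rw [if_pos hj]; exact hcL)
        have e2 : ((range (k s - k t)).filter
            (fun j => (i - (if k t + j < k t then s - (r : ZMod (2 * r + 1)) else s)).val ≤ r)).card
              = k s - k t :=
          count_true _ _ (fun j hj => by rw [if_neg (by omega)]; exact hcR)
        exact le_trans (show k i ≤ k t + (k s - k t) by rw [his]; omega)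
          (add_le_add e1.ge e2.ge)
      · have hki : k i ≤ k t := hkb i his
        rcases pair_cover r s i with hcL | hcR
        · have e1 : ((range (k t)).filter
              (fun col => (i - (if col < k t then s - (r : ZMod (2 * r + 1)) else s)).val ≤ r)).card
                = k t :=
            count_true _ _ (fun j hj => by rw [if_pos hj]; exact hcL)
          exact le_trans hki (le_trans e1.ge (Nat.le_add_right _ _))
        · have e2 : ((range (k s - k t)).filter
              (fun j => (i - (if k t + j < k t then s - (r : ZMod (2 * r + 1)) else s)).val ≤ r)).card
                = k s - k t :=
            count_true _ _ (fun j hj => by rw [if_neg (by omega)]; exact hcR)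
          exact le_trans hki (le_trans (le_trans (by omega : k t ≤ k s - k t) e2.ge)
            (Nat.le_add_left _ _))
    refine le_trans ?_ (le_max_right _ _)
    exact_mod_cast hchrom
  · -- Case 2 : k s < 2 k t
    push_neg at hcase
    obtain ⟨u, hu⟩ : ∃ u, u = 2 * k t - k s := ⟨_, rfl⟩
    obtain ⟨q, hq⟩ : ∃ q, q = u / (r + 1) := ⟨_, rfl⟩
    obtain ⟨ρ, hρ⟩ : ∃ x, x = u % (r + 1) := ⟨_, rfl⟩
    obtain ⟨QM, hQM⟩ : ∃ x, x = q * (2 * r + 1) := ⟨_, rfl⟩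
    obtain ⟨QR, hQRdef⟩ : ∃ x, x = q * (r + 1) := ⟨_, rfl⟩
    have hQRs : QR + ρ = u := by
      rw [hQRdef, hq, hρ, Nat.mul_comm]
      exact Nat.div_add_mod u (r + 1)
    have hρr : ρ ≤ r := by
      rw [hρ]
      exact Nat.lt_succ_iff.mp (Nat.mod_lt u (Nat.succ_pos r))
    set N := QM + (ρ + (ρ + ((k s - k t) + (k s - k t)))) with hN
    set st2 : ℕ → ZMod (2 * r + 1) := fun n =>
      if n < QM then (n : ZMod (2 * r + 1))
      else if n < QM + ρ then (0 : ZMod (2 * r + 1)) - (r : ZMod (2 * r + 1))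
      else if n < QM + ρ + ρ then 0
      else if n < QM + ρ + ρ + (k s - k t) then s - (r : ZMod (2 * r + 1))
      else s with hst2
    have hchrom : chromaticNumber (compTournRel r relP) ≤ N := by
      apply chrom_le r relP k colP N st2
      intro i
      rw [hN, count_split, count_split, count_split, count_split]
      -- values of the five pieces
      have e1 : ((range QM).filter (fun col => (i - st2 col).val ≤ r)).card = QR := by
        rw [hQM, hQRdef, ← count_uniform r q i]
        apply congrArg
        apply filter_congr
        intro v hv
        rw [mem_range] at hv
        simp only [hst2]
        rw [if_pos (show v < QM by rw [hQM]; exact hv)]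
      have e2 : (i - ((0 : ZMod (2 * r + 1)) - (r : ZMod (2 * r + 1)))).val ≤ r →
          ((range ρ).filter (fun j => (i - st2 (QM + j)).val ≤ r)).card = ρ := by
        intro hc
        refine count_true _ _ (fun j hj => ?_)
        simp only [hst2]
        rw [if_neg (by omega), if_pos (by omega)]
        exact hc
      have e3 : (i - (0 : ZMod (2 * r + 1))).val ≤ r →
          ((range ρ).filter (fun j => (i - st2 (QM + (ρ + j))).val ≤ r)).card = ρ := by
        intro hc
        refine count_true _ _ (fun j hj => ?_)
        simp only [hst2]
        rw [if_neg (by omega), if_neg (by omega), if_pos (by omega)]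
        exact hc
      have e4 : (i - (s - (r : ZMod (2 * r + 1)))).val ≤ r →
          ((range (k s - k t)).filter
            (fun j => (i - st2 (QM + (ρ + (ρ + j)))).val ≤ r)).card = k s - k t := by
        intro hc
        refine count_true _ _ (fun j hj => ?_)
        simp only [hst2]
        rw [if_neg (by omega), if_neg (by omega), if_neg (by omega), if_pos (by omega)]
        exact hc
      have e5 : (i - s).val ≤ r →
          ((range (k s - k t)).filter
            (fun j => (i - st2 (QM + (ρ + (ρ + ((k s - k t) + j))))).val ≤ r)).card
              = k s - k t := by
        intro hc
        refine count_true _ _ (fun j hj => ?_)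
        simp only [hst2]
        rw [if_neg (by omega), if_neg (by omega), if_neg (by omega), if_neg (by omega)]
        exact hc
      -- lower bounds for the middle pair (covering everything once)
      have hb23 : ∃ x2 x3, ρ ≤ x2 + x3 ∧
          x2 ≤ ((range ρ).filter (fun j => (i - st2 (QM + j)).val ≤ r)).card ∧
          x3 ≤ ((range ρ).filter (fun j => (i - st2 (QM + (ρ + j))).val ≤ r)).card := by
        rcases pair_cover r 0 i with hc | hc
        · exact ⟨ρ, 0, by omega, (e2 hc).ge, Nat.zero_le _⟩
        · exact ⟨0, ρ, by omega, Nat.zero_le _, (e3 hc).ge⟩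
      have hb45 : ∃ x4 x5, (if i = s then 2 * (k s - k t) else k s - k t) ≤ x4 + x5 ∧
          x4 ≤ ((range (k s - k t)).filter
            (fun j => (i - st2 (QM + (ρ + (ρ + j)))).val ≤ r)).card ∧
          x5 ≤ ((range (k s - k t)).filter
            (fun j => (i - st2 (QM + (ρ + (ρ + ((k s - k t) + j))))).val ≤ r)).card := by
        by_cases his : i = s
        · have hcL : (i - (s - (r : ZMod (2 * r + 1)))).val ≤ r := by
            rw [his]
            have h9 : s - (s - (r : ZMod (2 * r + 1))) = (r : ZMod (2 * r + 1)) := by ring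
            rw [h9, ZMod.val_cast_of_lt (by omega)]
          have hcR : (i - s).val ≤ r := by
            rw [his, sub_self, ZMod.val_zero]
            omega
          exact ⟨k s - k t, k s - k t, by rw [if_pos his]; omega, (e4 hcL).ge, (e5 hcR).ge⟩
        · rcases pair_cover r s i with hc | hc
          · exact ⟨k s - k t, 0, by rw [if_neg his]; omega, (e4 hc).ge, Nat.zero_le _⟩
          · exact ⟨0, k s - k t, by rw [if_neg his]; omega, Nat.zero_le _, (e5 hc).ge⟩
      obtain ⟨x2, x3, h23, hx2, hx3⟩ := hb23
      obtain ⟨x4, x5, h45, hx4, hx5⟩ := hb45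
      have hki : k i ≤ QR + (x2 + (x3 + (x4 + x5))) := by
        by_cases his : i = s
        · rw [if_pos his] at h45
          rw [his]
          omega
        · rw [if_neg his] at h45
          have := hkb i his
          omega
      exact le_trans hki
        (add_le_add e1.ge (add_le_add hx2 (add_le_add hx3 (add_le_add hx4 hx5))))
    -- the numerical bound
    have hnat : q * (r + 1) + ρ = 2 * k t - k s := by rw [← hQRdef, hQRs, hu]
    have hq1 : (q : ℚ) * ((r : ℚ) + 1) + (ρ : ℚ) = 2 * (k t : ℚ) - (k s : ℚ) := by
      have h := congrArg (Nat.cast : ℕ → ℚ) hnat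
      push_cast [Nat.cast_sub hcase.le] at h
      linarith [h]
    have hNQ : (N : ℚ) = 2 * (k t : ℚ) - (q : ℚ) := by
      have h := congrArg (Nat.cast : ℕ → ℚ) hN
      have hQMQ : (QM : ℚ) = (q : ℚ) * (2 * (r : ℚ) + 1) := by
        rw [hQM]
        push_cast
        ring
      push_cast [Nat.cast_sub hst.le] at h
      rw [hQMQ] at h
      linear_combination h + 2 * hq1
    have hfin : (N : ℤ) ≤ ⌈((2 * r + 1 : ℚ) * ((k s : ℚ) + k t) - 1) / (2 * r + 2)⌉ := by
      have hlt : ((N : ℤ) - 1) < ⌈((2 * r + 1 : ℚ) * ((k s : ℚ) + k t) - 1) / (2 * r + 2)⌉ := by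
        rw [Int.lt_ceil]
        push_cast
        rw [lt_div_iff₀ (by positivity)]
        rw [hNQ]
        have key : (1 : ℚ) ≤ (2 * (r : ℚ) - 1) * ((k s : ℚ) - (k t : ℚ)) := by
          have h1 : (1 : ℚ) ≤ 2 * (r : ℚ) - 1 := by
            have : (1 : ℚ) ≤ (r : ℚ) := by exact_mod_cast hr
            linarith
          have h2 : (1 : ℚ) ≤ (k s : ℚ) - (k t : ℚ) := by
            have : (k t : ℚ) + 1 ≤ (k s : ℚ) := by exact_mod_cast hst
            linarith
          nlinarith [h1, h2]
        have hρQ : (ρ : ℚ) ≤ (r : ℚ) := by exact_mod_cast hρr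
        nlinarith [hq1, key, hρQ]
      linarith [hlt]
    refine le_trans ?_ (le_max_left _ _)
    exact le_trans (show (chromaticNumber (compTournRel r relP) : ℤ) ≤ (N : ℤ) by
      exact_mod_cast hchrom) hfin
end
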